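/- Let 𝕂 be a field equipped with a non-Archimedean absolute value, let G be a t.d.l.c. group, let H be an open subgroup of G (with the subspace topology), and let M ≥ 0. If G admits a left-invariant normed 𝕂-mean of operator norm ≤ M, then H admits a left-invariant normed 𝕂-mean of operator norm ≤ M; hence ‖H‖_𝕂 ≤ ‖G‖_𝕂. -/

import Mathlib

open BoundedContinuousFunction

/-- The left translate of a bounded continuous function: `(leftTranslate 𝕂 g f) x = f (g⁻¹ * x)`. -/
noncomputable def leftTranslate {G : Type*} [Group G] [TopologicalSpace G] [IsTopologicalGroup G]
    (𝕂 : Type*) [NormedField 𝕂] (g : G) (f : G →ᵇ 𝕂) : G →ᵇ 𝕂 :=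
  f.compContinuous ⟨fun x => g⁻¹ * x, continuous_mul_left g⁻¹⟩

/-- `m` is a left-invariant normed `𝕂`-mean on `G`: a bounded (equivalently, continuous)
linear functional on the space of bounded continuous `𝕂`-valued functions on `G`, sending the
constant function `𝟙_G` to `1`, and invariant under left translation. -/
def IsInvariantMean (𝕂 : Type*) [NormedField 𝕂] (G : Type*) [Group G] [TopologicalSpace G]
    [IsTopologicalGroup G] (m : (G →ᵇ 𝕂) →ₗ[𝕂] 𝕂) : Prop :=
  (∃ C : ℝ, ∀ f : G →ᵇ 𝕂, ‖m f‖ ≤ C * ‖f‖) ∧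
    m (BoundedContinuousFunction.const G (1 : 𝕂)) = 1 ∧
    ∀ (g : G) (f : G →ᵇ 𝕂), m (leftTranslate 𝕂 g f) = m f

/-- The operator norm of the linear functional `m` is at most `C`. -/
def MeanNormLE (𝕂 : Type*) [NormedField 𝕂] (G : Type*) [Group G] [TopologicalSpace G]
    [IsTopologicalGroup G] (m : (G →ᵇ 𝕂) →ₗ[𝕂] 𝕂) (C : ℝ) : Prop :=
  ∀ f : G →ᵇ 𝕂, ‖m f‖ ≤ C * ‖f‖


noncomputable section AuxMean

variable {G : Type*} [Group G] [TopologicalSpace G] [IsTopologicalGroup G] (H : Subgroup G)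

/-- A representative of the right coset `H x`. -/
noncomputable def rcRep (x : G) : G := (Quotient.mk (QuotientGroup.rightRel H) x).out

lemma rcRep_mem (x : G) : x * (rcRep H x)⁻¹ ∈ H := by
  have h : (QuotientGroup.rightRel H) (rcRep H x) x := Quotient.mk_out x
  rwa [QuotientGroup.rightRel_apply] at h

lemma rcRep_eq_of {x y : G} (h : x * (rcRep H y)⁻¹ ∈ H) : rcRep H x = rcRep H y := by
  have h1 : Quotient.mk (QuotientGroup.rightRel H) x
      = Quotient.mk (QuotientGroup.rightRel H) (rcRep H y) :=
    Quotient.sound ((QuotientGroup.rightRel H).iseqv.symm ((QuotientGroup.rightRel_apply).2 h))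
  have h2 : Quotient.mk (QuotientGroup.rightRel H) (rcRep H y)
      = Quotient.mk (QuotientGroup.rightRel H) y := Quotient.out_eq _
  unfold rcRep
  rw [h1, h2]

/-- The `H`-part of `x` in the decomposition `x = h · t`. -/
noncomputable def hPart (x : G) : H := ⟨x * (rcRep H x)⁻¹, rcRep_mem H x⟩

lemma continuous_hPart (hH : IsOpen (H : Set G)) : Continuous (hPart H) := by
  rw [continuous_iff_continuousAt]
  intro x₀
  rw [Topology.IsInducing.subtypeVal.continuousAt_iff]
  have hopen : IsOpen {x : G | x * (rcRep H x₀)⁻¹ ∈ H} :=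
    hH.preimage (continuous_mul_right (rcRep H x₀)⁻¹)
  have hmem : x₀ ∈ {x : G | x * (rcRep H x₀)⁻¹ ∈ H} := rcRep_mem H x₀
  have hcongr : (fun x : G => x * (rcRep H x₀)⁻¹) =ᶠ[nhds x₀]
      (Subtype.val ∘ hPart H) := by
    filter_upwards [hopen.mem_nhds hmem] with x hx
    simp only [Function.comp, hPart, rcRep_eq_of H hx]
  exact ((continuous_mul_right _).continuousAt).congr hcongr

lemma hPart_smul (g : H) (x : G) : hPart H ((g : G)⁻¹ * x) = g⁻¹ * hPart H x := by
  have hrep : rcRep H ((g : G)⁻¹ * x) = rcRep H x := by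
    apply rcRep_eq_of
    have := rcRep_mem H x
    have h2 : (g : G)⁻¹ * x * (rcRep H x)⁻¹ = (g : G)⁻¹ * (x * (rcRep H x)⁻¹) := by group
    rw [h2]
    exact H.mul_mem (H.inv_mem g.2) this
  ext
  simp [hPart, hrep, mul_assoc]

end AuxMean

/-- If `H` is an open subgroup of a t.d.l.c. group `G` and `G` admits a
left-invariant normed `𝕂`-mean of operator norm `≤ M`, then so does `H`. -/
theorem invariantMean_of_openSubgroup (𝕂 : Type*) [NormedField 𝕂] [IsUltrametricDist 𝕂]
    (G : Type*) [Group G] [TopologicalSpace G] [IsTopologicalGroup G]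
    [LocallyCompactSpace G] [TotallyDisconnectedSpace G] [T2Space G]
    (H : Subgroup G) (hH : IsOpen (H : Set G))
    (M : ℝ) (hM : 0 ≤ M)
    (h : ∃ m : (G →ᵇ 𝕂) →ₗ[𝕂] 𝕂, IsInvariantMean 𝕂 G m ∧ MeanNormLE 𝕂 G m M) :
    ∃ m' : (↥H →ᵇ 𝕂) →ₗ[𝕂] 𝕂, IsInvariantMean 𝕂 ↥H m' ∧ MeanNormLE 𝕂 ↥H m' M := by
  obtain ⟨m, ⟨_, hone, hinv⟩, hnorm⟩ := h
  let c : C(G, ↥H) := ⟨hPart H, continuous_hPart H hH⟩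
  have hadd : ∀ f₁ f₂ : ↥H →ᵇ 𝕂, (f₁ + f₂).compContinuous c
      = f₁.compContinuous c + f₂.compContinuous c := fun f₁ f₂ => by ext x; rfl
  have hsmul : ∀ (a : 𝕂) (f : ↥H →ᵇ 𝕂), (a • f).compContinuous c
      = a • f.compContinuous c := fun a f => by ext x; rfl
  refine ⟨{ toFun := fun f => m (f.compContinuous c),
            map_add' := fun f₁ f₂ => by
              show m ((f₁ + f₂).compContinuous c) = _
              rw [hadd, map_add],
            map_smul' := fun a f => by
              show m ((a • f).compContinuous c) = _
              rw [hsmul, map_smul]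
              rfl }, ⟨⟨M, ?_⟩, ?_, ?_⟩, ?_⟩
  · intro f
    exact le_trans (hnorm _) (mul_le_mul_of_nonneg_left (f.norm_compContinuous_le c) hM)
  · have : (BoundedContinuousFunction.const ↥H (1 : 𝕂)).compContinuous c
        = BoundedContinuousFunction.const G (1 : 𝕂) := by ext x; rfl
    show m ((BoundedContinuousFunction.const ↥H (1 : 𝕂)).compContinuous c) = 1
    rw [this]; exact hone
  · intro g f
    have key : (leftTranslate 𝕂 g f).compContinuous c
        = leftTranslate 𝕂 (g : G) (f.compContinuous c) := by
      ext x
      show f (g⁻¹ * hPart H x) = f (hPart H ((g : G)⁻¹ * x))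
      rw [hPart_smul]
    show m ((leftTranslate 𝕂 g f).compContinuous c) = m (f.compContinuous c)
    rw [key]
    exact hinv (g : G) (f.compContinuous c)
  · intro f
    exact le_trans (hnorm _) (mul_le_mul_of_nonneg_left (f.norm_compContinuous_le c) hM)
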